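/- If a graph H is obtained from G by a sequence of identifications of vertices such that at each step the identified vertices are at distance at least 3 in the current graph, then h(G) ≤ h(H). -/

import Mathlib

def IsHarmonious {V : Type*} {α : Type*} (G : SimpleGraph V) (c : V → α) : Prop :=
  (∀ ⦃u v : V⦄, G.Adj u v → c u ≠ c v) ∧
  ∀ ⦃u v x y : V⦄, G.Adj u v → G.Adj x y →
    s(c u, c v) = s(c x, c y) → s(u, v) = s(x, y)

noncomputable def hchrom {V : Type*} [Fintype V] (G : SimpleGraph V) : ℕ :=
  sInf {k | ∃ c : V → Fin k, IsHarmonious G c}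

def DistAtLeastThree {V : Type*} (G : SimpleGraph V) (u v : V) : Prop :=
  u ≠ v ∧ ¬ G.Adj u v ∧ ∀ w : V, ¬ (G.Adj u w ∧ G.Adj w v)

/-- The graph `G ∘ uv` obtained by identifying `v` with `u`: vertex `v` is
removed and `u` becomes adjacent to all former neighbors of `v`. -/
def identify {V : Type*} (G : SimpleGraph V) (u v : V) :
    SimpleGraph {x : V // x ≠ v} where
  Adj a b := a ≠ b ∧
    (G.Adj a.1 b.1 ∨ (a.1 = u ∧ G.Adj v b.1) ∨ (b.1 = u ∧ G.Adj a.1 v))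
  symm := by
    constructor
    rintro a b ⟨hab, h | ⟨h1, h2⟩ | ⟨h1, h2⟩⟩
    · exact ⟨hab.symm, Or.inl h.symm⟩
    · exact ⟨hab.symm, Or.inr (Or.inr ⟨h1, h2.symm⟩)⟩
    · exact ⟨hab.symm, Or.inr (Or.inl ⟨h1, h2.symm⟩)⟩
  loopless := ⟨fun a h => h.1 rfl⟩

/-- `SeqIdent3 G H`: `H` is obtained from `G` by a sequence of identifications,
each applied to a pair of vertices at distance at least 3 in the current graph. -/
inductive SeqIdent3 : ∀ {n m : ℕ}, SimpleGraph (Fin n) → SimpleGraph (Fin m) → Prop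
  | refl {n : ℕ} (G : SimpleGraph (Fin n)) : SeqIdent3 G G
  | step {n m : ℕ} {G : SimpleGraph (Fin (n + 1))} {G' : SimpleGraph (Fin n)}
      {H : SimpleGraph (Fin m)} (u v : Fin (n + 1))
      (hd : DistAtLeastThree G u v) (hiso : Nonempty (G' ≃g identify G u v)) :
      SeqIdent3 G' H → SeqIdent3 G H


lemma harm_comp {V W α : Type*} {G : SimpleGraph V} {H : SimpleGraph W}
    (f : V → W) (hadj : ∀ ⦃a b⦄, G.Adj a b → H.Adj (f a) (f b))
    (hinj : ∀ ⦃a b x y⦄, G.Adj a b → G.Adj x y →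
      s(f a, f b) = s(f x, f y) → s(a, b) = s(x, y))
    {c : W → α} (hc : IsHarmonious H c) : IsHarmonious G (c ∘ f) := by
  refine ⟨fun a b h => hc.1 (hadj h), fun a b x y hab hxy hcol => ?_⟩
  exact hinj hab hxy (hc.2 (hadj hab) (hadj hxy) hcol)

lemma harm_inj {V α : Type*} {G : SimpleGraph V} {c : V → α} (hc : Function.Injective c) :
    IsHarmonious G c := by
  refine ⟨fun a b h hne => h.ne (hc hne), fun a b x y hab hxy hcol => ?_⟩
  rw [Sym2.eq_iff] at hcol ⊢
  rcases hcol with ⟨h1, h2⟩ | ⟨h1, h2⟩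
  · exact Or.inl ⟨hc h1, hc h2⟩
  · exact Or.inr ⟨hc h1, hc h2⟩

lemma hchrom_le_of_map {V W : Type*} [Fintype V] [Fintype W] {G : SimpleGraph V}
    {H : SimpleGraph W} (f : V → W)
    (hadj : ∀ ⦃a b⦄, G.Adj a b → H.Adj (f a) (f b))
    (hinj : ∀ ⦃a b x y⦄, G.Adj a b → G.Adj x y →
      s(f a, f b) = s(f x, f y) → s(a, b) = s(x, y)) :
    hchrom G ≤ hchrom H := by
  have hne : {k | ∃ c : W → Fin k, IsHarmonious H c}.Nonempty :=
    ⟨Fintype.card W, (Fintype.equivFin W : W → Fin (Fintype.card W)),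
      harm_inj (Fintype.equivFin W).injective⟩
  obtain ⟨c, hc⟩ := Nat.sInf_mem hne
  exact Nat.sInf_le ⟨c ∘ f, harm_comp f hadj hinj hc⟩

lemma hchrom_le_of_iso {V W : Type*} [Fintype V] [Fintype W] {G : SimpleGraph V}
    {H : SimpleGraph W} (e : G ≃g H) : hchrom G ≤ hchrom H := by
  refine hchrom_le_of_map e (fun a b h => e.map_adj_iff.mpr h) ?_
  intro a b x y _ _ hcol
  rw [Sym2.eq_iff] at hcol ⊢
  rcases hcol with ⟨h1, h2⟩ | ⟨h1, h2⟩
  · exact Or.inl ⟨e.injective h1, e.injective h2⟩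
  · exact Or.inr ⟨e.injective h1, e.injective h2⟩

lemma hchrom_identify_le {V : Type*} [Fintype V] [DecidableEq V] (G : SimpleGraph V)
    (u v : V) (hd : DistAtLeastThree G u v) :
    hchrom G ≤ hchrom (identify G u v) := by
  obtain ⟨hne, hnadj, hcommon⟩ := hd
  set f : V → {x : V // x ≠ v} := fun x => if h : x = v then ⟨u, hne⟩ else ⟨x, h⟩ with hf
  have hfv : f v = ⟨u, hne⟩ := by simp [hf]
  have hfx : ∀ (x : V) (h : x ≠ v), f x = ⟨x, h⟩ := fun x h => by simp [hf, h]
  have key : ∀ (a x : V), f a = f x → a = x ∨ (a = v ∧ x = u) ∨ (a = u ∧ x = v) := by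
    intro a x h
    by_cases ha : a = v <;> by_cases hx : x = v
    · exact Or.inl (ha.trans hx.symm)
    · rw [ha, hfv, hfx x hx] at h
      exact Or.inr (Or.inl ⟨ha, (Subtype.ext_iff.mp h).symm⟩)
    · rw [hx, hfv, hfx a ha] at h
      exact Or.inr (Or.inr ⟨Subtype.ext_iff.mp h, hx⟩)
    · rw [hfx a ha, hfx x hx] at h
      exact Or.inl (Subtype.ext_iff.mp h)
  apply hchrom_le_of_map f
  · intro a b hab
    by_cases ha : a = v <;> by_cases hb : b = v
    · exact absurd (ha.trans hb.symm) hab.ne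
    · rw [ha, hfv, hfx b hb]
      refine ⟨fun h => hnadj ?_, Or.inr (Or.inl ⟨rfl, ha ▸ hab⟩)⟩
      have hub : u = b := congrArg Subtype.val h
      rw [hub]
      exact (ha ▸ hab : G.Adj v b).symm
    · rw [hb, hfv, hfx a ha]
      refine ⟨fun h => hnadj ?_, Or.inr (Or.inr ⟨rfl, hb ▸ hab⟩)⟩
      have hau : a = u := congrArg Subtype.val h
      rw [← hau]
      exact (hb ▸ hab : G.Adj a v)
    · rw [hfx a ha, hfx b hb]
      exact ⟨fun h => hab.ne (Subtype.ext_iff.mp h), Or.inl hab⟩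
  · intro a b x y hab hxy hcol
    have main : ∀ (a b x y : V), G.Adj a b → G.Adj x y → f a = f x → f b = f y →
        a = x ∧ b = y := by
      intro a b x y hab hxy h1 h2
      rcases key a x h1 with h1' | ⟨hav, hxu⟩ | ⟨hau, hxv⟩
      · rcases key b y h2 with h2' | ⟨hbv, hyu⟩ | ⟨hbu, hyv⟩
        · exact ⟨h1', h2'⟩
        · subst h1'; subst hbv; subst hyu
          exact absurd ⟨hxy.symm, hab⟩ (hcommon a)
        · subst h1'; subst hbu; subst hyv
          exact absurd ⟨hab.symm, hxy⟩ (hcommon a)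
      · rcases key b y h2 with h2' | ⟨hbv, hyu⟩ | ⟨hbu, hyv⟩
        · subst h2'; subst hav; subst hxu
          exact absurd ⟨hxy, hab.symm⟩ (hcommon b)
        · subst hav; subst hbv; exact absurd rfl hab.ne
        · subst hav; subst hbu; exact absurd hab.symm hnadj
      · rcases key b y h2 with h2' | ⟨hbv, hyu⟩ | ⟨hbu, hyv⟩
        · subst h2'; subst hau; subst hxv
          exact absurd ⟨hab, hxy.symm⟩ (hcommon b)
        · subst hau; subst hbv; exact absurd hab hnadj
        · subst hxv; subst hyv; exact absurd rfl hxy.ne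
    rw [Sym2.eq_iff] at hcol ⊢
    rcases hcol with ⟨h1, h2⟩ | ⟨h1, h2⟩
    · obtain ⟨e1, e2⟩ := main a b x y hab hxy h1 h2
      exact Or.inl ⟨e1, e2⟩
    · obtain ⟨e1, e2⟩ := main a b y x hab hxy.symm h1 h2
      exact Or.inr ⟨e1, e2⟩

theorem stmt11 {n m : ℕ} (G : SimpleGraph (Fin n)) (H : SimpleGraph (Fin m))
    (hseq : SeqIdent3 G H) : hchrom G ≤ hchrom H := by
  induction hseq with
  | refl G => exact le_refl _
  | step u v hd hiso hrec ih =>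
    calc hchrom _ ≤ hchrom (identify _ u v) := hchrom_identify_le _ u v hd
      _ ≤ hchrom _ := hchrom_le_of_iso hiso.some.symm
      _ ≤ _ := ih
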